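/- If A ∈ ℝ^{m×p} and B ∈ ℝ^{m×q} have orthogonal column spaces (i.e., AᵀB = 0), then ‖[A, B]‖_* = ‖A‖_* + ‖B‖_*. -/

import Mathlib

open Matrix

/-- The nuclear norm of a real matrix: the sum of its singular values,
i.e. the sum of the square roots of the eigenvalues of `Aᴴ * A`. -/
noncomputable def nuclearNorm {m n : Type*} [Fintype m] [Fintype n] [DecidableEq n]
    (A : Matrix m n ℝ) : ℝ :=
  ∑ i, Real.sqrt ((Matrix.isHermitian_conjTranspose_mul_self A).eigenvalues i)

noncomputable def Matrix.PosSemidef.sqrt {n : Type*} [Fintype n] [DecidableEq n]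
    {M : Matrix n n ℝ} (hM : M.PosSemidef) : Matrix n n ℝ :=
  (hM.1.eigenvectorUnitary : Matrix n n ℝ) * diagonal (Real.sqrt ∘ hM.1.eigenvalues) *
    star (hM.1.eigenvectorUnitary : Matrix n n ℝ)

open scoped MatrixOrder in
lemma Matrix.PosSemidef.sqrt_eq_cfc {n : Type*} [Fintype n] [DecidableEq n]
    {M : Matrix n n ℝ} (hM : M.PosSemidef) : hM.sqrt = CFC.sqrt M := by
  rw [CFC.sqrt_eq_cfc, cfc_nnreal_eq_real _ M, hM.1.cfc_eq]
  simp only [IsHermitian.cfc, Matrix.PosSemidef.sqrt, Unitary.conjStarAlgAut_apply]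
  congr 3
  funext i
  simp [Real.coe_sqrt, hM.eigenvalues_nonneg i]

open scoped MatrixOrder in
lemma Matrix.PosSemidef.posSemidef_sqrt {n : Type*} [Fintype n] [DecidableEq n]
    {M : Matrix n n ℝ} (hM : M.PosSemidef) : hM.sqrt.PosSemidef := by
  rw [hM.sqrt_eq_cfc]
  exact (CFC.sqrt_nonneg M).posSemidef

open scoped MatrixOrder in
@[simp]
lemma Matrix.PosSemidef.sq_sqrt {n : Type*} [Fintype n] [DecidableEq n]
    {M : Matrix n n ℝ} (hM : M.PosSemidef) : hM.sqrt ^ 2 = M := by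
  rw [hM.sqrt_eq_cfc]
  exact CFC.sq_sqrt M hM.nonneg

open scoped MatrixOrder in
lemma Matrix.PosSemidef.eq_sqrt_of_sq_eq {n : Type*} [Fintype n] [DecidableEq n]
    {M B : Matrix n n ℝ} (hB : B.PosSemidef) (hM : M.PosSemidef) (hBM : B ^ 2 = M) :
    B = hM.sqrt := by
  rw [hM.sqrt_eq_cfc]
  exact ((CFC.sqrt_eq_iff M B hM.nonneg hB.nonneg).mpr (by rw [← hBM, sq])).symm

lemma trace_sqrt {n : Type*} [Fintype n] [DecidableEq n] {M : Matrix n n ℝ}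
    (hM : M.PosSemidef) : hM.sqrt.trace = ∑ i, Real.sqrt (hM.1.eigenvalues i) := by
  have h1 : (star (hM.1.eigenvectorUnitary : Matrix n n ℝ)) * hM.1.eigenvectorUnitary = 1 := by
    simpa using Unitary.coe_star_mul_self hM.1.eigenvectorUnitary
  rw [Matrix.PosSemidef.sqrt, trace_mul_cycle, h1, one_mul, trace_diagonal]
  simp

lemma posSemidef_fromBlocks {n₁ n₂ : Type*} [Fintype n₁] [Fintype n₂]
    {M : Matrix n₁ n₁ ℝ} {N : Matrix n₂ n₂ ℝ} (hM : M.PosSemidef) (hN : N.PosSemidef) :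
    (fromBlocks M 0 0 N).PosSemidef := by
  refine .of_dotProduct_mulVec_nonneg ?_ ?_
  · show _ᴴ = _
    rw [fromBlocks_conjTranspose, hM.1, hN.1]
    simp
  · intro x
    have hx : x = Sum.elim (x ∘ Sum.inl) (x ∘ Sum.inr) := by ext i; cases i <;> rfl
    rw [hx, fromBlocks_mulVec]
    simp only [zero_mulVec, add_zero, zero_add]
    rw [show star (Sum.elim (x ∘ Sum.inl) (x ∘ Sum.inr)) =
      Sum.elim (star (x ∘ Sum.inl)) (star (x ∘ Sum.inr)) by ext i; cases i <;> rfl]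
    rw [sumElim_dotProduct_sumElim]
    exact add_nonneg (hM.dotProduct_mulVec_nonneg _) (hN.dotProduct_mulVec_nonneg _)

theorem nuclearNorm_fromColumns_of_orthogonal {m p q : ℕ}
    (A : Matrix (Fin m) (Fin p) ℝ) (B : Matrix (Fin m) (Fin q) ℝ)
    (h : Aᵀ * B = 0) :
    nuclearNorm (Matrix.fromCols A B) = nuclearNorm A + nuclearNorm B := by
  have hA : (Aᵀ * A).PosSemidef := by
    simpa [conjTranspose_eq_transpose_of_trivial] using posSemidef_conjTranspose_mul_self A
  have hB : (Bᵀ * B).PosSemidef := by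
    simpa [conjTranspose_eq_transpose_of_trivial] using posSemidef_conjTranspose_mul_self B
  have hC : ((fromCols A B)ᵀ * fromCols A B).PosSemidef := by
    simpa [conjTranspose_eq_transpose_of_trivial] using
      posSemidef_conjTranspose_mul_self (fromCols A B)
  have h' : Bᵀ * A = 0 := by
    have := congrArg Matrix.transpose h
    simpa [transpose_mul] using this
  have hblock : (fromCols A B)ᵀ * fromCols A B = fromBlocks (Aᵀ * A) 0 0 (Bᵀ * B) := by
    rw [transpose_fromCols, fromRows_mul_fromCols, h, h']
  have hP : (fromBlocks hA.sqrt 0 0 hB.sqrt).PosSemidef :=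
    posSemidef_fromBlocks hA.posSemidef_sqrt hB.posSemidef_sqrt
  have hsq : (fromBlocks hA.sqrt 0 0 hB.sqrt) ^ 2 = (fromCols A B)ᵀ * fromCols A B := by
    rw [pow_two, fromBlocks_multiply, hblock]
    simp [← pow_two]
  have hkey : fromBlocks hA.sqrt 0 0 hB.sqrt = hC.sqrt := hP.eq_sqrt_of_sq_eq hC hsq
  have trC : hC.sqrt.trace = hA.sqrt.trace + hB.sqrt.trace := by
    rw [← hkey, trace, Fintype.sum_sum_type]
    rfl
  have e1 : nuclearNorm (fromCols A B) = hC.sqrt.trace := (trace_sqrt hC).symm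
  have e2 : nuclearNorm A = hA.sqrt.trace := (trace_sqrt hA).symm
  have e3 : nuclearNorm B = hB.sqrt.trace := (trace_sqrt hB).symm
  rw [e1, e2, e3, trC]
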